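/- Let F be the CDF on [1/2, M] with density f(t) = 2(1 − (M−1)ε) on [1/2, 1) and f(t) = ε on [1, M], where ε = 1/M² and M > 5. Define β(x) = ∫_{1/2}^x f(t)(e^t − 1)/(F(t) + (1 − F(t))e^t) dt. Then β(M − 1) > (1/3)·ln(M/2). -/

import Mathlib

open intervalIntegral Real MeasureTheory Set

private lemma exp_ge_4x {x : ℝ} (hx : 5/2 ≤ x) : 2*(2*x) ≤ Real.exp x := by
  have h := Real.sum_le_exp_of_nonneg (by linarith : (0:ℝ) ≤ x) 5
  simp [Finset.sum_range_succ, Nat.factorial] at h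
  nlinarith [sq_nonneg (x - 5/2), sq_nonneg x, sq_nonneg (x*(x-5/2))]

private lemma exp_ge_7 {t : ℝ} (ht : 5/2 ≤ t) : 7 ≤ Real.exp t := by
  have h := Real.sum_le_exp_of_nonneg (by linarith : (0:ℝ) ≤ t) 4
  simp [Finset.sum_range_succ, Nat.factorial] at h
  nlinarith [sq_nonneg (t - 5/2)]

set_option maxHeartbeats 1000000 in
/-- From the proof of Theorem 6: for the value distribution with density
`2(1 − (M−1)ε)` on `[1/2, 1)` and `ε = 1/M²` on `[1, M]` (M > 5), the
symmetric equilibrium bidding function `β` of the all-pay auction satisfies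
`β(M − 1) > (1/3)·ln(M/2)`. -/
theorem stmt7 (M : ℝ) (hM : 5 < M)
    (ε : ℝ) (hε : ε = 1 / M ^ 2)
    (f : ℝ → ℝ)
    (hf : ∀ t : ℝ, f t = if t < 1 then 2 * (1 - (M - 1) * ε) else ε)
    (F : ℝ → ℝ) (hF : ∀ x : ℝ, F x = ∫ t in (1/2 : ℝ)..x, f t)
    (β : ℝ → ℝ)
    (hβ : ∀ x : ℝ, β x =
      ∫ t in (1/2 : ℝ)..x, f t * (Real.exp t - 1) / (F t + (1 - F t) * Real.exp t)) :
    (1/3) * Real.log (M / 2) < β (M - 1) := by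
  have hM0 : (0:ℝ) < M := by linarith
  have hM2 : (0:ℝ) < M ^ 2 := by positivity
  have hε0 : 0 < ε := by rw [hε]; positivity
  have hεM : ε * M ^ 2 = 1 := by rw [hε]; field_simp
  set c : ℝ := 2 * (1 - (M - 1) * ε) with hc
  have hc0 : 0 ≤ c := by
    have h1 : (M - 1) * ε ≤ 1 := by
      rw [hε, mul_one_div, div_le_one hM2]; nlinarith
    simp only [hc]; linarith
  have hc2 : c ≤ 2 := by
    have : 0 ≤ (M - 1) * ε := mul_nonneg (by linarith) hε0.le
    simp only [hc]; linarith
  -- a.e. avoidance of the point 1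
  have hne1 : ∀ᵐ t : ℝ, t ≠ (1:ℝ) := by
    rw [ae_iff]
    simp only [not_not]
    rw [show {x : ℝ | x = 1} = {1} from rfl]
    exact Real.volume_singleton
  -- integral of f over [1/2, 1]
  have hI1 : ∫ t in (1/2:ℝ)..1, f t = c / 2 := by
    have h : ∀ᵐ t : ℝ, t ∈ Set.uIoc (1/2:ℝ) 1 → f t = c := by
      filter_upwards [hne1] with t htne ht
      rw [Set.uIoc_of_le (by norm_num : (1/2:ℝ) ≤ 1)] at ht
      rw [hf t, if_pos (lt_of_le_of_ne ht.2 htne)]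
    rw [intervalIntegral.integral_congr_ae h, intervalIntegral.integral_const]
    simp [smul_eq_mul]; ring
  -- integrability of f on [1/2, 1]
  have hint1 : IntervalIntegrable f volume (1/2) 1 := by
    apply (_root_.intervalIntegrable_const (c := c)).congr_ae
    filter_upwards [ae_restrict_mem measurableSet_uIoc,
      hne1.filter_mono (ae_mono Measure.restrict_le_self)] with t ht htne
    rw [Set.uIoc_of_le (by norm_num : (1/2:ℝ) ≤ 1)] at ht
    rw [hf t, if_pos (lt_of_le_of_ne ht.2 htne)]
  -- integral and integrability of f on [1, x]
  have hEq2 : ∀ x : ℝ, 1 ≤ x → EqOn f (fun _ => ε) (uIcc (1:ℝ) x) := by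
    intro x hx t ht
    rw [uIcc_of_le hx] at ht
    rw [hf t, if_neg (not_lt.2 ht.1)]
  have hI2 : ∀ x : ℝ, 1 ≤ x → ∫ t in (1:ℝ)..x, f t = ε * (x - 1) := by
    intro x hx
    rw [intervalIntegral.integral_congr (hEq2 x hx), intervalIntegral.integral_const]
    simp [smul_eq_mul]; ring
  have hint2 : ∀ x : ℝ, 1 ≤ x → IntervalIntegrable f volume 1 x := by
    intro x hx
    apply (_root_.intervalIntegrable_const (c := ε)).congr_ae
    filter_upwards [ae_restrict_mem measurableSet_uIoc] with t ht
    exact (hEq2 x hx (uIoc_subset_uIcc ht)).symm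
  -- F on [1, M]
  have hFhigh : ∀ x : ℝ, 1 ≤ x → F x = 1 - ε * (M - x) := by
    intro x hx
    rw [hF x, ← intervalIntegral.integral_add_adjacent_intervals hint1 (hint2 x hx),
      hI1, hI2 x hx]
    simp only [hc, hε]; field_simp; ring
  -- F on [1/2, 1]
  have hFlow : ∀ t : ℝ, t ∈ Icc (1/2:ℝ) 1 → F t = c * (t - 1/2) := by
    intro t ht
    rw [hF t]
    have h : ∀ᵐ s : ℝ, s ∈ Set.uIoc (1/2:ℝ) t → f s = c := by
      filter_upwards [hne1] with s hsne hs
      rw [Set.uIoc_of_le ht.1] at hs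
      rw [hf s, if_pos (lt_of_le_of_ne (hs.2.trans ht.2) hsne)]
    rw [intervalIntegral.integral_congr_ae h, intervalIntegral.integral_const]
    simp [smul_eq_mul]; ring
  -- abbreviations
  set g : ℝ → ℝ := fun t => f t * (Real.exp t - 1) / (F t + (1 - F t) * Real.exp t) with hg
  set h1 : ℝ → ℝ := fun t =>
    c * (Real.exp t - 1) / (c * (t - 1/2) + (1 - c * (t - 1/2)) * Real.exp t) with hh1
  set h2 : ℝ → ℝ := fun t =>
    ε * (Real.exp t - 1) / ((1 - ε * (M - t)) + (ε * (M - t)) * Real.exp t) with hh2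
  -- denominator bounds
  have hd1 : ∀ t : ℝ, t ∈ Icc (1/2:ℝ) 1 →
      1 ≤ c * (t - 1/2) + (1 - c * (t - 1/2)) * Real.exp t := by
    intro t ht
    have he : 1 ≤ Real.exp t := Real.one_le_exp (by linarith [ht.1])
    have hp0 : 0 ≤ c * (t - 1/2) := by
      apply mul_nonneg hc0; linarith [ht.1]
    have hp1 : c * (t - 1/2) ≤ 1 := by nlinarith [ht.2]
    nlinarith
  have hd2 : ∀ t : ℝ, t ∈ Icc (1:ℝ) (M-1) →
      1 ≤ (1 - ε * (M - t)) + (ε * (M - t)) * Real.exp t := by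
    intro t ht
    have he : 1 ≤ Real.exp t := Real.one_le_exp (by linarith [ht.1])
    have hp0 : 0 ≤ ε * (M - t) := by
      apply mul_nonneg hε0.le; linarith [ht.2]
    nlinarith
  -- g equals h1 a.e. on [1/2, 1], and equals h2 on [1, M-1]
  have hgEq2 : ∀ a b : ℝ, 1 ≤ a → b ≤ M - 1 → a ≤ b → EqOn g h2 (uIcc a b) := by
    intro a b ha hb hab t ht
    rw [uIcc_of_le hab] at ht
    have ht1 : (1:ℝ) ≤ t := ha.trans ht.1
    simp only [hg, hh2, hf t, if_neg (not_lt.2 ht1), hFhigh t ht1]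
    ring_nf
  -- continuity of h1 on [1/2, 1]
  have hcont1 : ContinuousOn h1 (uIcc (1/2:ℝ) 1) := by
    rw [uIcc_of_le (by norm_num : (1/2:ℝ) ≤ 1)]
    apply ContinuousOn.div (by fun_prop) (by fun_prop)
    intro t ht
    have := hd1 t ht; linarith
  -- continuity of h2 on any subinterval of [1, M-1]
  have hcont2 : ∀ a b : ℝ, 1 ≤ a → b ≤ M - 1 → a ≤ b → ContinuousOn h2 (uIcc a b) := by
    intro a b ha hb hab
    rw [uIcc_of_le hab]
    apply ContinuousOn.div (by fun_prop) (by fun_prop)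
    intro t ht
    have := hd2 t ⟨ha.trans ht.1, ht.2.trans hb⟩; linarith
  -- interval integrability of g on the three pieces
  have hgi1 : IntervalIntegrable g volume (1/2) 1 := by
    apply (hcont1.intervalIntegrable).congr_ae
    filter_upwards [ae_restrict_mem measurableSet_uIoc,
      hne1.filter_mono (ae_mono Measure.restrict_le_self)] with t ht htne
    rw [Set.uIoc_of_le (by norm_num : (1/2:ℝ) ≤ 1)] at ht
    have ht' : t ∈ Icc (1/2:ℝ) 1 := ⟨ht.1.le, ht.2⟩
    simp only [hg, hh1, hf t, if_pos (lt_of_le_of_ne ht.2 htne), hFlow t ht']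
  have hM2le : (1:ℝ) ≤ M/2 := by linarith
  have hMle : M/2 ≤ M - 1 := by linarith
  have hgi2 : IntervalIntegrable g volume 1 (M/2) := by
    apply ((hcont2 1 (M/2) le_rfl hMle hM2le).intervalIntegrable).congr_ae
    filter_upwards [ae_restrict_mem measurableSet_uIoc] with t ht
    exact (hgEq2 1 (M/2) le_rfl hMle hM2le (uIoc_subset_uIcc ht)).symm
  have hgi3 : IntervalIntegrable g volume (M/2) (M-1) := by
    apply ((hcont2 (M/2) (M-1) hM2le le_rfl hMle).intervalIntegrable).congr_ae
    filter_upwards [ae_restrict_mem measurableSet_uIoc] with t ht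
    exact (hgEq2 (M/2) (M-1) hM2le le_rfl hMle (uIoc_subset_uIcc ht)).symm
  -- split β (M-1)
  have hsplit : β (M-1) = (∫ t in (1/2:ℝ)..1, g t) + (∫ t in (1:ℝ)..(M/2), g t)
      + (∫ t in (M/2:ℝ)..(M-1), g t) := by
    rw [hβ (M-1)]
    rw [← intervalIntegral.integral_add_adjacent_intervals (hgi1.trans hgi2) hgi3,
      ← intervalIntegral.integral_add_adjacent_intervals hgi1 hgi2]
  -- piece 1 nonneg
  have hP1 : 0 ≤ ∫ t in (1/2:ℝ)..1, g t := by
    have hEq : ∫ t in (1/2:ℝ)..1, g t = ∫ t in (1/2:ℝ)..1, h1 t := by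
      apply intervalIntegral.integral_congr_ae
      filter_upwards [hne1] with t htne ht
      rw [Set.uIoc_of_le (by norm_num : (1/2:ℝ) ≤ 1)] at ht
      simp only [hg, hh1, hf t, if_pos (lt_of_le_of_ne ht.2 htne),
        hFlow t ⟨ht.1.le, ht.2⟩]
    rw [hEq]
    apply intervalIntegral.integral_nonneg (by norm_num)
    intro u hu
    have hd := hd1 u hu
    have he : 1 ≤ Real.exp u := Real.one_le_exp (by linarith [hu.1])
    apply div_nonneg
    · apply mul_nonneg hc0; linarith
    · linarith
  -- piece 2 nonneg
  have hP2 : 0 ≤ ∫ t in (1:ℝ)..(M/2), g t := by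
    rw [intervalIntegral.integral_congr (hgEq2 1 (M/2) le_rfl hMle hM2le)]
    apply intervalIntegral.integral_nonneg hM2le
    intro u hu
    have hd := hd2 u ⟨hu.1, hu.2.trans hMle⟩
    have he : 1 ≤ Real.exp u := Real.one_le_exp (by linarith [hu.1])
    apply div_nonneg
    · apply mul_nonneg hε0.le; linarith
    · linarith
  -- the key pointwise bound on [M/2, M-1]
  have hkey : ∀ t : ℝ, t ∈ Icc (M/2) (M-1) → (3/7) * (M - t)⁻¹ ≤ h2 t := by
    intro t ht
    have hs1 : (1:ℝ) ≤ M - t := by linarith [ht.2]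
    have hs2 : M - t ≤ M/2 := by linarith [ht.1]
    have hs0 : (0:ℝ) < M - t := by linarith
    have htM2 : 5/2 ≤ t := by linarith [ht.1]
    have he7 : 7 ≤ Real.exp t := exp_ge_7 htM2
    have he0 : (0:ℝ) < Real.exp t := Real.exp_pos t
    -- A := ε (M-t) exp t ≥ 1
    have hA : 1 ≤ ε * (M - t) * Real.exp t := by
      have hsplitexp : Real.exp t = Real.exp (M/2) * Real.exp (t - M/2) := by
        rw [← Real.exp_add]; ring_nf
      have hlin : (t - M/2) + 1 ≤ Real.exp (t - M/2) := Real.add_one_le_exp _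
      have hprod : M/2 ≤ (M - t) * ((t - M/2) + 1) := by nlinarith [ht.1, ht.2]
      have hexpM : 2 * M ≤ Real.exp (M/2) := by
        have := exp_ge_4x (x := M/2) (by linarith)
        linarith
      have heM0 : (0:ℝ) < Real.exp (M/2) := Real.exp_pos _
      have hstep : M ^ 2 ≤ (M - t) * Real.exp t := by
        calc M ^ 2 = (2 * M) * (M/2) := by ring
          _ ≤ Real.exp (M/2) * ((M - t) * ((t - M/2) + 1)) := by
              apply mul_le_mul hexpM hprod (by positivity) heM0.le
          _ ≤ Real.exp (M/2) * ((M - t) * Real.exp (t - M/2)) := by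
              apply mul_le_mul_of_nonneg_left _ heM0.le
              apply mul_le_mul_of_nonneg_left hlin hs0.le
          _ = (M - t) * Real.exp t := by rw [hsplitexp]; ring
      calc (1:ℝ) = ε * M ^ 2 := hεM.symm
        _ ≤ ε * ((M - t) * Real.exp t) := by
            apply mul_le_mul_of_nonneg_left hstep hε0.le
        _ = ε * (M - t) * Real.exp t := by ring
    -- conclude
    have hd := hd2 t ⟨by linarith [ht.1], ht.2⟩
    have hD0 : (0:ℝ) < (1 - ε * (M - t)) + (ε * (M - t)) * Real.exp t := by linarith
    simp only [hh2]
    have hB0 : 0 ≤ ε * (M - t) := mul_nonneg hε0.le hs0.le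
    have hAB : 7 * (ε * (M - t)) ≤ ε * (M - t) * Real.exp t := by
      calc 7 * (ε * (M - t)) = (ε * (M - t)) * 7 := by ring
        _ ≤ (ε * (M - t)) * Real.exp t := mul_le_mul_of_nonneg_left he7 hB0
    have key : (3/7) * (1 - ε * (M - t) + ε * (M - t) * Real.exp t)
        ≤ ε * (Real.exp t - 1) * (M - t) := by
      have hexpand : ε * (Real.exp t - 1) * (M - t)
          = ε * (M - t) * Real.exp t - ε * (M - t) := by ring
      rw [hexpand]; linarith
    calc (3/7:ℝ) * (M - t)⁻¹ = (3/7) / (M - t) := by ring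
      _ ≤ ε * (Real.exp t - 1) / (1 - ε * (M - t) + ε * (M - t) * Real.exp t) := by
          rw [div_le_div_iff₀ hs0 hD0]; linarith [key]
  -- integral of (M - t)⁻¹ over [M/2, M-1]
  have hci : IntervalIntegrable (fun t => (M - t)⁻¹) volume (M/2) (M-1) := by
    apply ContinuousOn.intervalIntegrable
    rw [uIcc_of_le hMle]
    apply ContinuousOn.inv₀ (by fun_prop)
    intro t ht
    have : (0:ℝ) < M - t := by linarith [ht.2]
    exact ne_of_gt this
  have hlog : ∫ t in (M/2:ℝ)..(M-1), (M - t)⁻¹ = Real.log (M/2) := by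
    have hderiv : ∀ t ∈ uIcc (M/2:ℝ) (M-1),
        HasDerivAt (fun u => -Real.log (M - u)) ((M - t)⁻¹) t := by
      intro t ht
      rw [uIcc_of_le hMle] at ht
      have hMt : (0:ℝ) < M - t := by linarith [ht.2]
      have h0 : HasDerivAt (fun u : ℝ => M - u) (-1) t := by
        simpa using (hasDerivAt_id t).const_sub M
      have hl := (h0.log (ne_of_gt hMt)).neg
      exact hl.congr_deriv (by ring)
    rw [intervalIntegral.integral_eq_sub_of_hasDerivAt hderiv hci]
    rw [show M - (M - 1) = (1:ℝ) by ring, show M - M/2 = M/2 by ring, Real.log_one]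
    ring
  -- piece 3 lower bound
  have hP3 : (3/7) * Real.log (M/2) ≤ ∫ t in (M/2:ℝ)..(M-1), g t := by
    rw [intervalIntegral.integral_congr (hgEq2 (M/2) (M-1) hM2le le_rfl hMle)]
    have hci' : IntervalIntegrable (fun t => (3/7) * (M - t)⁻¹) volume (M/2) (M-1) :=
      hci.const_mul _
    have hInt2 : IntervalIntegrable h2 volume (M/2) (M-1) :=
      (hcont2 (M/2) (M-1) hM2le le_rfl hMle).intervalIntegrable
    calc (3/7) * Real.log (M/2) = ∫ t in (M/2:ℝ)..(M-1), (3/7) * (M - t)⁻¹ := by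
          rw [intervalIntegral.integral_const_mul, hlog]
      _ ≤ ∫ t in (M/2:ℝ)..(M-1), h2 t :=
          intervalIntegral.integral_mono_on hMle hci' hInt2 hkey
  have hlogpos : 0 < Real.log (M/2) := Real.log_pos (by linarith)
  rw [hsplit]
  nlinarith [hP1, hP2, hP3]
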